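/- arXiv:2312.14529 — 3 statements merged into one kernel-verified Lean document; each statement's English description precedes it below -/
import Mathlib

section
/- Let (P, v) be a cooperative game that is monotone (B ⊆ B' implies v(B) ≤ v(B')) and binary (v takes values only in {0,1}), and suppose there exists s ∈ P with v({s}) = 1. Then for every player p ∈ P, Sh(P,v,p) ≤ Sh(P,v,s), where Sh denotes the Shapley value. -/
/-- The Shapley value of player `p`, defined via the permutation formula:
the average over all orderings of the players of the marginal contribution of `p`. -/
def shapleyValue {α : Type*} [Fintype α] [DecidableEq α] (v : Finset α → ℚ) (p : α) : ℚ :=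
  (1 / ((Fintype.card α).factorial : ℚ)) *
    ∑ σ : Fin (Fintype.card α) ≃ α,
      (v (insert p (Finset.univ.filter fun x => σ.symm x < σ.symm p)) -
        v (Finset.univ.filter fun x => σ.symm x < σ.symm p))

/-- In a monotone binary cooperative game, a player `s` with `v {s} = 1` has
maximal Shapley value. -/
theorem singleton_support_max_shapley
    {α : Type*} [Fintype α] [DecidableEq α]
    (v : Finset α → ℚ) (hv : v ∅ = 0)
    (hmono : ∀ B B' : Finset α, B ⊆ B' → v B ≤ v B')
    (hbin : ∀ B : Finset α, v B = 0 ∨ v B = 1)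
    (s : α) (hs : v {s} = 1) :
    ∀ p : α, shapleyValue v p ≤ shapleyValue v s := by
  intro p
  have hle1 : ∀ B : Finset α, v B ≤ 1 := by
    intro B; rcases hbin B with h | h <;> simp [h]
  have hfull : ∀ B : Finset α, s ∈ B → v B = 1 := by
    intro B hB
    have h := hmono {s} B (Finset.singleton_subset_iff.mpr hB)
    rw [hs] at h
    exact le_antisymm (hle1 B) h
  unfold shapleyValue
  apply mul_le_mul_of_nonneg_left _ (by positivity)
  have hswap : ∀ σ : Fin (Fintype.card α) ≃ α,
      (σ.trans (Equiv.swap p s)).trans (Equiv.swap p s) = σ := by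
    intro σ
    ext x
    simp [Equiv.swap_apply_self]
  let e : (Fin (Fintype.card α) ≃ α) ≃ (Fin (Fintype.card α) ≃ α) :=
    ⟨fun σ => σ.trans (Equiv.swap p s), fun σ => σ.trans (Equiv.swap p s),
      hswap, hswap⟩
  rw [← Equiv.sum_comp e (fun σ : Fin (Fintype.card α) ≃ α =>
      (v (insert s (Finset.univ.filter fun x => σ.symm x < σ.symm s)) -
        v (Finset.univ.filter fun x => σ.symm x < σ.symm s)))]
  apply Finset.sum_le_sum
  intro σ _
  have hesymm : ∀ x : α, (e σ).symm x = σ.symm (Equiv.swap p s x) := by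
    intro x; simp [e]
  have hesymms : (e σ).symm s = σ.symm p := by
    rw [hesymm, Equiv.swap_apply_right]
  set B : Finset α := Finset.univ.filter fun x => σ.symm x < σ.symm p with hBdef
  have hBmem : ∀ x : α, x ∈ B ↔ σ.symm x < σ.symm p := by
    intro x; simp [hBdef]
  set B' : Finset α := Finset.univ.filter fun x => (e σ).symm x < (e σ).symm s with hB'def
  have hB'mem : ∀ x : α, x ∈ B' ↔ σ.symm (Equiv.swap p s x) < σ.symm p := by
    intro x; simp [hB'def, hesymm, hesymms]
  by_cases hsB : s ∈ B
  · -- v B = 1, so p's marginal contribution is ≤ 0, while s's is ≥ 0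
    have hvB : v B = 1 := hfull B hsB
    have h1 : v (insert p B) ≤ 1 := hle1 _
    have h2 : v B' ≤ v (insert s B') := hmono _ _ (Finset.subset_insert _ _)
    linarith
  · -- swap fixes B, so B' = B
    have hpB : p ∉ B := by
      rw [hBmem]; exact lt_irrefl _
    have hB'B : B' = B := by
      ext x
      rw [hB'mem, hBmem]
      rcases eq_or_ne x p with rfl | hxp
      · rw [Equiv.swap_apply_left]
        constructor
        · intro h; exact absurd ((hBmem s).mpr h) hsB
        · intro h; exact absurd ((hBmem x).mpr h) hpB
      · rcases eq_or_ne x s with rfl | hxs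
        · rw [Equiv.swap_apply_right]
          constructor
          · intro h; exact absurd h (lt_irrefl _)
          · intro h; exact absurd ((hBmem x).mpr h) hsB
        · rw [Equiv.swap_apply_of_ne_of_ne hxp hxs]
    have hvsB : v (insert s B) = 1 := hfull _ (Finset.mem_insert_self _ _)
    have h1 : v (insert p B) ≤ 1 := hle1 _
    simp only [hB'B, hvsB]
    linarith
end

section
/- Fix a positive integer m. For each n ∈ ℕ, the (n+1)×(n+1) matrix M with entries M[i][j] = (i + j)! for 0 ≤ i, j ≤ n is invertible over ℚ. -/
open Finset Matrix

lemma choose_sq_sum (i j n : ℕ) (hi : i ≤ n) :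
    ∑ k ∈ range (n + 1), i.choose k * j.choose k = (i + j).choose i := by
  have h1 : ∑ k ∈ range (n + 1), i.choose k * j.choose k
      = ∑ k ∈ range (i + 1), i.choose k * j.choose k := by
    refine (Finset.sum_subset (Finset.range_subset_range.mpr (by omega)) ?_).symm
    intro x _ hx
    simp only [mem_range, not_lt] at hx
    rw [Nat.choose_eq_zero_of_lt (by omega), zero_mul]
  rw [h1, add_comm i j, Nat.add_choose_eq,
    Finset.Nat.sum_antidiagonal_eq_sum_range_succ_mk]
  refine Finset.sum_congr rfl fun k hk => ?_
  simp only [mem_range] at hk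
  rw [Nat.choose_symm (by omega), mul_comm]

/-- The (n+1)×(n+1) matrix with entries `(i+j)!` is invertible over ℚ. -/
theorem factorial_matrix_invertible (m : ℕ) (hm : 0 < m) (n : ℕ) :
    (Matrix.of fun i j : Fin (n + 1) => (((i : ℕ) + (j : ℕ)).factorial : ℚ)).det ≠ 0 := by
  set B : Matrix (Fin (n + 1)) (Fin (n + 1)) ℚ :=
    Matrix.of fun i k : Fin (n + 1) => (((i : ℕ).factorial * (i : ℕ).choose k : ℕ) : ℚ) with hB
  have hfact : (Matrix.of fun i j : Fin (n + 1) => (((i : ℕ) + (j : ℕ)).factorial : ℚ))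
      = B * Bᵀ := by
    ext i j
    simp only [Matrix.mul_apply, Matrix.transpose_apply, hB, Matrix.of_apply]
    have key : ∑ k ∈ range (n + 1), ((i : ℕ).factorial * (i : ℕ).choose k)
        * ((j : ℕ).factorial * (j : ℕ).choose k) = ((i : ℕ) + (j : ℕ)).factorial := by
      have := choose_sq_sum i j n (by omega)
      calc ∑ k ∈ range (n + 1), ((i : ℕ).factorial * (i : ℕ).choose k)
            * ((j : ℕ).factorial * (j : ℕ).choose k)
          = ∑ k ∈ range (n + 1), ((i : ℕ).choose k * (j : ℕ).choose k)
            * ((i : ℕ).factorial * (j : ℕ).factorial) := by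
            refine Finset.sum_congr rfl fun k _ => by ring
        _ = ((i : ℕ) + (j : ℕ)).choose i * ((i : ℕ).factorial * (j : ℕ).factorial) := by
            rw [← Finset.sum_mul, this]
        _ = ((i : ℕ) + (j : ℕ)).factorial := by
            have h2 := Nat.choose_mul_factorial_mul_factorial
              (n := (i : ℕ) + (j : ℕ)) (k := (i : ℕ)) (by omega)
            rw [Nat.add_sub_cancel_left] at h2
            rw [← h2]; ring
    calc (((i : ℕ) + (j : ℕ)).factorial : ℚ)
        = ((∑ k ∈ range (n + 1), ((i : ℕ).factorial * (i : ℕ).choose k)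
            * ((j : ℕ).factorial * (j : ℕ).choose k) : ℕ) : ℚ) := by rw [key]
      _ = ∑ k : Fin (n + 1), (((i : ℕ).factorial * (i : ℕ).choose k : ℕ) : ℚ)
            * (((j : ℕ).factorial * (j : ℕ).choose k : ℕ) : ℚ) := by
          push_cast
          rw [← Fin.sum_univ_eq_sum_range
            (f := fun k => ((i : ℕ).factorial * (i : ℕ).choose k : ℚ)
              * ((j : ℕ).factorial * (j : ℕ).choose k : ℚ))]
  have hBtri : B.BlockTriangular OrderDual.toDual := by
    intro a b hab
    simp only [OrderDual.toDual_lt_toDual] at hab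
    simp only [hB, Matrix.of_apply]
    rw [Nat.choose_eq_zero_of_lt (by exact_mod_cast hab), mul_zero, Nat.cast_zero]
  have hBdet : B.det = ∏ i : Fin (n + 1), ((i : ℕ).factorial : ℚ) := by
    rw [Matrix.det_of_lowerTriangular B hBtri]
    refine Finset.prod_congr rfl fun i _ => ?_
    simp [hB, Nat.choose_self]
  rw [hfact, Matrix.det_mul, Matrix.det_transpose, hBdet]
  positivity
end

section
/- Let n, i, m ∈ ℕ and let G_0, …, G_n be rational numbers. Define Sh^i := Σ_{j=0}^{n} ((j+m)! · (n+i−j)! / (n+i+m+1)!) · G_j. Then the (n+1)×(n+1) linear system expressing (Sh^0, …, Sh^n) in terms of (G_0, …, G_n) has an invertible coefficient matrix; i.e., the matrix A with A[i][j] = (j+m)!(n+i−j)!/(n+i+m+1)! for 0 ≤ i,j ≤ n is invertible over ℚ. -/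
open Finset Matrix

/-- Vandermonde-type identity: `∑_k C(i,k)C(j,k) = C(i+j,i)` when the range covers `i`. -/
lemma sum_choose_mul_choose (N i j : ℕ) (hi : i < N) :
    ∑ k ∈ Finset.range N, i.choose k * j.choose k = (i + j).choose i := by
  have h0 : ∑ k ∈ Finset.range N, i.choose k * j.choose k
      = ∑ k ∈ Finset.range (i + 1), i.choose k * j.choose k := by
    symm
    apply Finset.sum_subset
    · intro k hk
      rw [Finset.mem_range] at *
      omega
    · intro k _ hk
      rw [Finset.mem_range, Nat.lt_succ_iff, not_le] at hk
      rw [Nat.choose_eq_zero_of_lt hk, zero_mul]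
  have h2 : ∑ k ∈ Finset.range (i + 1), i.choose k * j.choose k
      = ∑ k ∈ Finset.range (i + 1), i.choose k * j.choose (i - k) := by
    rw [← Finset.sum_range_reflect (fun k => i.choose k * j.choose (i - k)) (i + 1)]
    apply Finset.sum_congr rfl
    intro k hk
    rw [Finset.mem_range] at hk
    have hk' : k ≤ i := Nat.lt_succ_iff.mp hk
    simp only [Nat.add_sub_cancel]
    rw [Nat.choose_symm hk', Nat.sub_sub_self hk']
  rw [h0, h2, Nat.add_choose_eq, Finset.Nat.sum_antidiagonal_eq_sum_range_succ_mk]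

/-- The lower-triangular Pascal matrix has determinant 1. -/
lemma det_pascal_lower (N : ℕ) :
    (Matrix.of fun i j : Fin N => (((i : ℕ).choose (j : ℕ) : ℚ))).det = 1 := by
  rw [Matrix.det_of_lowerTriangular]
  · simp
  · intro i j hij
    simp only [OrderDual.toDual_lt_toDual] at hij
    simp only [Matrix.of_apply]
    rw [Nat.choose_eq_zero_of_lt (by exact_mod_cast hij)]
    simp

/-- The symmetric Pascal matrix `C(i+j, i)` has nonzero determinant. -/
lemma det_pascal_symm (N : ℕ) :
    (Matrix.of fun i j : Fin N => ((((i : ℕ) + (j : ℕ)).choose (i : ℕ) : ℚ))).det = 1 := by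
  have hfact : (Matrix.of fun i j : Fin N => ((((i : ℕ) + (j : ℕ)).choose (i : ℕ) : ℚ))) =
      (Matrix.of fun i j : Fin N => (((i : ℕ).choose (j : ℕ) : ℚ))) *
      (Matrix.of fun i j : Fin N => (((i : ℕ).choose (j : ℕ) : ℚ)))ᵀ := by
    ext i j
    simp only [Matrix.mul_apply, Matrix.transpose_apply, Matrix.of_apply]
    rw [← sum_choose_mul_choose N i j i.isLt, Nat.cast_sum, Finset.sum_range]
    push_cast
    rfl
  rw [hfact, Matrix.det_mul, Matrix.det_transpose, det_pascal_lower]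
  norm_num

/-- The Hankel matrix of factorials `(i+j)!` has nonzero determinant. -/
lemma det_hankel_factorial (N : ℕ) :
    (Matrix.of fun i j : Fin N => ((((i : ℕ) + (j : ℕ)).factorial : ℚ))).det ≠ 0 := by
  have key : (Matrix.of fun i j : Fin N => ((((i : ℕ) + (j : ℕ)).factorial : ℚ))) =
      Matrix.of fun i j : Fin N => (((i : ℕ).factorial : ℚ)) *
        ((((j : ℕ).factorial : ℚ)) * ((((i : ℕ) + (j : ℕ)).choose (i : ℕ) : ℚ))) := by
    ext i j
    simp only [Matrix.of_apply]
    have := Nat.choose_mul_factorial_mul_factorial (Nat.le_add_right (i : ℕ) (j : ℕ))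
    rw [Nat.add_sub_cancel_left] at this
    rw [← this]
    push_cast
    ring
  rw [key]
  rw [show (Matrix.of fun i j : Fin N => (((i : ℕ).factorial : ℚ)) *
        ((((j : ℕ).factorial : ℚ)) * ((((i : ℕ) + (j : ℕ)).choose (i : ℕ) : ℚ)))) =
      Matrix.of fun i j : Fin N => (((i : ℕ).factorial : ℚ)) *
        (Matrix.of fun i j : Fin N => ((((j : ℕ).factorial : ℚ)) *
          (Matrix.of fun i j : Fin N => ((((i : ℕ) + (j : ℕ)).choose (i : ℕ) : ℚ))) i j)) i j
    from rfl]
  rw [Matrix.det_mul_column, Matrix.det_mul_row, det_pascal_symm]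
  apply mul_ne_zero
  · exact Finset.prod_ne_zero_iff.mpr fun i _ => Nat.cast_ne_zero.mpr (Nat.factorial_ne_zero _)
  · rw [mul_one]
    exact Finset.prod_ne_zero_iff.mpr fun i _ => Nat.cast_ne_zero.mpr (Nat.factorial_ne_zero _)

/-- The matrix `(n+i-j)!` has nonzero determinant: reverse columns to get `(i+j)!`. -/
lemma det_sub_factorial (n : ℕ) :
    (Matrix.of fun i j : Fin (n + 1) => (((n + (i : ℕ) - (j : ℕ)).factorial : ℚ))).det ≠ 0 := by
  have hrev : (Matrix.of fun i j : Fin (n + 1) => (((n + (i : ℕ) - (j : ℕ)).factorial : ℚ))) =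
      (Matrix.of fun i j : Fin (n + 1) =>
        ((((i : ℕ) + (j : ℕ)).factorial : ℚ))).submatrix id Fin.revPerm := by
    ext i j
    simp only [Matrix.submatrix_apply, Matrix.of_apply, id_eq, Fin.revPerm_apply]
    have hj : (j : ℕ) ≤ n := Nat.lt_succ_iff.mp j.isLt
    have hrv : ((j.rev : ℕ)) = n - (j : ℕ) := by
      simp [Fin.rev, Nat.succ_sub_succ]
    have harg : n + (i : ℕ) - (j : ℕ) = (i : ℕ) + ((j.rev : ℕ)) := by rw [hrv]; omega
    rw [harg]
  rw [hrev, Matrix.det_permute']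
  apply mul_ne_zero
  · exact Int.cast_ne_zero.mpr (Units.ne_zero _)
  · exact det_hankel_factorial (n + 1)

/-- The coefficient matrix of the linear system expressing the values `Sh^i` in terms of
the generalized support counts `G_j`, with entries `(j+m)!(n+i−j)!/(n+i+m+1)!`, is
invertible over ℚ. -/
theorem reduction_coefficient_matrix_invertible (n m : ℕ) :
    (Matrix.of fun i j : Fin (n + 1) =>
      (((j : ℕ) + m).factorial : ℚ) * ((n + (i : ℕ) - (j : ℕ)).factorial : ℚ) /
        ((n + (i : ℕ) + m + 1).factorial : ℚ)).det ≠ 0 := by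
  have key : (Matrix.of fun i j : Fin (n + 1) =>
      (((j : ℕ) + m).factorial : ℚ) * ((n + (i : ℕ) - (j : ℕ)).factorial : ℚ) /
        ((n + (i : ℕ) + m + 1).factorial : ℚ)) =
      Matrix.of fun i j : Fin (n + 1) =>
        (((n + (i : ℕ) + m + 1).factorial : ℚ))⁻¹ *
        (Matrix.of (fun i j : Fin (n + 1) => ((((j : ℕ) + m).factorial : ℚ)) *
          ((Matrix.of fun i j : Fin (n + 1) =>
            (((n + (i : ℕ) - (j : ℕ)).factorial : ℚ))) i j)) i j) := by
    ext i j
    simp only [Matrix.of_apply]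
    rw [div_eq_mul_inv]
    ring
  rw [key, Matrix.det_mul_column, Matrix.det_mul_row]
  apply mul_ne_zero
  · exact Finset.prod_ne_zero_iff.mpr fun i _ =>
      inv_ne_zero (Nat.cast_ne_zero.mpr (Nat.factorial_ne_zero _))
  · apply mul_ne_zero
    · exact Finset.prod_ne_zero_iff.mpr fun i _ =>
        Nat.cast_ne_zero.mpr (Nat.factorial_ne_zero _)
    · exact det_sub_factorial n
end
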